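/- With the improved parity-to-Büchi construction A' (merging ≡_{2k}-equivalent states and delaying the guess of the minimal even parity 2k to a state of parity 2k), every word accepted by A' is accepted by the original NPW P. Consequently L(P) = L(A'). -/

import Mathlib

/-- A nondeterministic Büchi automaton. -/
structure NBW (A Q : Type*) where
  init : Q
  trans : Q → A → Set Q
  acc : Set Q

def NBW.IsRun {A Q : Type*} (M : NBW A Q) (w : ℕ → A) (ρ : ℕ → Q) : Prop :=
  ρ 0 = M.init ∧ ∀ i, ρ (i + 1) ∈ M.trans (ρ i) (w i)

def NBW.Accepting {A Q : Type*} (M : NBW A Q) (ρ : ℕ → Q) : Prop :=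
  ∃ q ∈ M.acc, ∀ N, ∃ i ≥ N, ρ i = q

def NBW.Lang {A Q : Type*} (M : NBW A Q) : Set (ℕ → A) :=
  {w | ∃ ρ, M.IsRun w ρ ∧ M.Accepting ρ}

/-- A nondeterministic parity automaton: `par` assigns each state its parity. -/
structure NPW (A Q : Type*) where
  init : Q
  trans : Q → A → Set Q
  par : Q → ℕ

/-- The set of states occurring infinitely often in a run. -/
def InfOcc {Q : Type*} (ρ : ℕ → Q) : Set Q := {q | ∀ N, ∃ i ≥ N, ρ i = q}

/-- The parity acceptance condition: the minimum parity among states occurring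
infinitely often is even. -/
def ParityAccepting {Q : Type*} (F : Q → ℕ) (ρ : ℕ → Q) : Prop :=
  ∃ q ∈ InfOcc ρ, Even (F q) ∧ ∀ p ∈ InfOcc ρ, F q ≤ F p

def NPW.IsRun {A Q : Type*} (P : NPW A Q) (w : ℕ → A) (ρ : ℕ → Q) : Prop :=
  ρ 0 = P.init ∧ ∀ i, ρ (i + 1) ∈ P.trans (ρ i) (w i)

def NPW.Lang {A Q : Type*} (P : NPW A Q) : Set (ℕ → A) :=
  {w | ∃ ρ, P.IsRun w ρ ∧ ParityAccepting P.par ρ}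

/-- The merging relation `≡_e` (for an even parity `e`). -/
def EqvPar {A Q : Type*} (P : NPW A Q) (e : ℕ) (p q : Q) : Prop :=
  (∀ a, P.trans p a = P.trans q a) ∧
    ((P.par p = e ∧ P.par q = e) ∨ (e < P.par p ∧ e < P.par q) ∨
     (P.par p < e ∧ P.par q < e))

/-- The `≡_e`-equivalence class `[q]_e`. -/
def ClsPar {A Q : Type*} (P : NPW A Q) (e : ℕ) (q : Q) : Set Q :=
  {p | EqvPar P e p q}

/-- The improved conversion from an NPW (parities bounded by `2*r`) to an NBW:
states are pairs `([q]_{2k}, 2k)` of an equivalence class together with the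
guessed minimal even parity (the second component `0` also serves as "no guess"). -/
def improvedConv {A Q : Type*} (P : NPW A Q) (r : ℕ) : NBW A (Set Q × ℕ) where
  init := (ClsPar P 0 P.init, 0)
  trans := fun s a =>
    {t | -- [TR1]
      (∃ p q k, 0 < k ∧ k ≤ r ∧ s = (ClsPar P 0 p, 0) ∧
        t = (ClsPar P (2 * k) q, 2 * k) ∧
        (P.trans p a ∩ ClsPar P (2 * k) q).Nonempty ∧ P.par q = 2 * k) ∨
      -- [TR2]
      (∃ p q k, k ≤ r ∧ s = (ClsPar P (2 * k) p, 2 * k) ∧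
        t = (ClsPar P (2 * k) q, 2 * k) ∧
        (P.trans p a ∩ ClsPar P (2 * k) q).Nonempty ∧ 2 * k ≤ P.par q)}
  acc := {s | ∃ q k, k ≤ r ∧ s = (ClsPar P (2 * k) q, 2 * k) ∧ P.par q = 2 * k}

section Aux

variable {A Q : Type*}

lemma eqvPar_refl (P : NPW A Q) (e : ℕ) (q : Q) : EqvPar P e q q := by
  refine ⟨fun a => rfl, ?_⟩
  rcases lt_trichotomy (P.par q) e with h | h | h
  · exact Or.inr (Or.inr ⟨h, h⟩)
  · exact Or.inl ⟨h, h⟩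
  · exact Or.inr (Or.inl ⟨h, h⟩)

lemma mem_clsPar_self (P : NPW A Q) (e : ℕ) (q : Q) : q ∈ ClsPar P e q :=
  eqvPar_refl P e q

lemma clsPar_trans_eq {P : NPW A Q} {e : ℕ} {p q : Q} (h : p ∈ ClsPar P e q) (a : A) :
    P.trans p a = P.trans q a := h.1 a

lemma clsPar_par_ge {P : NPW A Q} {e : ℕ} {p q : Q} (h : p ∈ ClsPar P e q)
    (hq : e ≤ P.par q) : e ≤ P.par p := by
  rcases h.2 with ⟨h1, h2⟩ | ⟨h1, h2⟩ | ⟨h1, h2⟩ <;> omega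

lemma clsPar_par_eq {P : NPW A Q} {e : ℕ} {p q : Q} (h : p ∈ ClsPar P e q)
    (hq : P.par q = e) : P.par p = e := by
  rcases h.2 with ⟨h1, h2⟩ | ⟨h1, h2⟩ | ⟨h1, h2⟩ <;> omega

lemma improvedConv_sound [Fintype Q] (P : NPW A Q) (r : ℕ) :
    (improvedConv P r).Lang ⊆ P.Lang := by
  classical
  rintro w ⟨σ, ⟨hinit, hstep⟩, s, hsacc, hsinf⟩
  -- normalize the transition information
  have key : ∀ i, ∃ p e q k,
      σ i = (ClsPar P e p, e) ∧ σ (i + 1) = (ClsPar P (2 * k) q, 2 * k) ∧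
      (P.trans p (w i) ∩ ClsPar P (2 * k) q).Nonempty ∧ 2 * k ≤ P.par q ∧
      (e ≠ 0 → e = 2 * k) := by
    intro i
    rcases hstep i with ⟨p, q, k, _, _, hs, ht, hne, hpar⟩ |
      ⟨p, q, k, _, hs, ht, hne, hpar⟩
    · exact ⟨p, 0, q, k, hs, ht, hne, hpar.ge, fun h => absurd rfl h⟩
    · exact ⟨p, 2 * k, q, k, hs, ht, hne, hpar, fun _ => rfl⟩
  -- build the run of P
  obtain ⟨ρ, hρ0, hρs⟩ : ∃ ρ : ℕ → Q, ρ 0 = P.init ∧ ∀ i, ρ (i + 1) =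
      if h : (P.trans (ρ i) (w i) ∩ (σ (i + 1)).1).Nonempty then h.choose else ρ i :=
    ⟨fun n => Nat.rec P.init (fun i x =>
      if h : (P.trans x (w i) ∩ (σ (i + 1)).1).Nonempty then h.choose else x) n,
      rfl, fun i => rfl⟩
  have hgood : ∀ i, ρ i ∈ (σ i).1 →
      ρ (i + 1) ∈ P.trans (ρ i) (w i) ∧ ρ (i + 1) ∈ (σ (i + 1)).1 := by
    intro i hi
    obtain ⟨p, e, q, k, hs, ht, hne, _, _⟩ := key i
    have h1 : ρ i ∈ ClsPar P e p := by rw [hs] at hi; exact hi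
    have hNE : (P.trans (ρ i) (w i) ∩ (σ (i + 1)).1).Nonempty := by
      rw [clsPar_trans_eq h1 (w i), ht]; exact hne
    have heq : ρ (i + 1) = hNE.choose := by rw [hρs i]; exact dif_pos hNE
    rw [heq]
    exact ⟨hNE.choose_spec.1, hNE.choose_spec.2⟩
  have hmem : ∀ i, ρ i ∈ (σ i).1 := by
    intro i
    induction i with
    | zero => rw [hρ0, hinit]; exact mem_clsPar_self P 0 P.init
    | succ i ih => exact (hgood i ih).2
  have hstep' : ∀ i, ρ (i + 1) ∈ P.trans (ρ i) (w i) := fun i => (hgood i (hmem i)).1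
  -- parity lower bound along the run
  have hparge : ∀ i, (σ (i + 1)).2 ≤ P.par (ρ (i + 1)) := by
    intro i
    obtain ⟨p, e, q, k, hs, ht, hne, hq, _⟩ := key i
    have h1 : ρ (i + 1) ∈ ClsPar P (2 * k) q := by
      have := hmem (i + 1); rw [ht] at this; exact this
    have h2 := clsPar_par_ge h1 hq
    rw [ht]; exact h2
  -- stability of the second component
  have hstab : ∀ i, (σ i).2 ≠ 0 → (σ (i + 1)).2 = (σ i).2 := by
    intro i h
    obtain ⟨p, e, q, k, hs, ht, hne, _, himp⟩ := key i
    have he : (σ i).2 = e := by rw [hs]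
    have h2 : e = 2 * k := himp (he ▸ h)
    rw [ht, he]; exact h2.symm
  have hstab' : ∀ i j, i ≤ j → (σ i).2 ≠ 0 → (σ j).2 = (σ i).2 := by
    intro i j hij hne
    induction j, hij using Nat.le_induction with
    | base => rfl
    | succ j hij ih => rw [hstab j (by rw [ih]; exact hne), ih]
  -- the accepting state
  obtain ⟨qs, ks, hksr, hseq, hqspar⟩ := hsacc
  have hat : ∀ i, σ i = s → P.par (ρ i) = 2 * ks := by
    intro i hi
    have := hmem i
    rw [hi, hseq] at this
    exact clsPar_par_eq this hqspar
  -- minimality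
  have hmin : ∀ p ∈ InfOcc ρ, 2 * ks ≤ P.par p := by
    rcases Nat.eq_zero_or_pos ks with hk0 | hkpos
    · intro p _; omega
    · obtain ⟨i₁, hi₁ge, hi₁⟩ := hsinf 1
      have h2 : (σ i₁).2 = 2 * ks := by rw [hi₁, hseq]
      intro p hp
      obtain ⟨j, hj, hjp⟩ := hp i₁
      have hj2 : (σ j).2 = 2 * ks := by
        rw [hstab' i₁ j hj (by rw [h2]; omega)]; exact h2
      obtain ⟨j', rfl⟩ : ∃ j', j = j' + 1 := ⟨j - 1, by omega⟩
      have h3 := hparge j'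
      rw [hj2, hjp] at h3
      exact h3
  -- pigeonhole: some state of parity 2*ks occurs infinitely often
  have hTinf : {i | σ i = s}.Infinite := by
    apply Set.infinite_of_not_bddAbove
    rintro ⟨b, hb⟩
    obtain ⟨i, hi, hieq⟩ := hsinf (b + 1)
    have : i ≤ b := hb (show i ∈ {i | σ i = s} from hieq)
    omega
  have hfib : ∃ q0, ({i | σ i = s} ∩ ρ ⁻¹' {q0}).Infinite := by
    by_contra h
    push_neg at h
    have hsub : {i | σ i = s} ⊆ ⋃ q0 : Q, ({i | σ i = s} ∩ ρ ⁻¹' {q0}) :=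
      fun i hi => Set.mem_iUnion.mpr ⟨ρ i, hi, rfl⟩
    exact hTinf (Set.Finite.subset
      (Set.finite_iUnion (fun q0 => h q0)) hsub)
  obtain ⟨q0, hq0⟩ := hfib
  have hq0inf : q0 ∈ InfOcc ρ := by
    intro N
    obtain ⟨i, hiT, hilt⟩ := hq0.exists_gt N
    exact ⟨i, le_of_lt hilt, hiT.2⟩
  have hq0par : P.par q0 = 2 * ks := by
    obtain ⟨i, hiT, _⟩ := hq0.exists_gt 0
    have h1 := hat i hiT.1
    have h2 : ρ i = q0 := hiT.2
    rw [h2] at h1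
    exact h1
  refine ⟨ρ, ⟨hρ0, hstep'⟩, q0, hq0inf, ?_, ?_⟩
  · rw [hq0par]; exact ⟨ks, by ring⟩
  · intro p hp; rw [hq0par]; exact hmin p hp

lemma improvedConv_complete [Fintype Q] (P : NPW A Q) (r : ℕ)
    (hbound : ∀ q, P.par q ≤ 2 * r) : P.Lang ⊆ (improvedConv P r).Lang := by
  classical
  rintro w ⟨ρ, ⟨h0, hs⟩, qs, hqinf, hqeven, hqmin⟩
  obtain ⟨k, hk⟩ : ∃ k, P.par qs = 2 * k := by
    obtain ⟨m, hm⟩ := hqeven; exact ⟨m, by omega⟩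
  have hkr : k ≤ r := by have := hbound qs; omega
  -- eventually only infinitely-occurring states
  obtain ⟨N, hN⟩ : ∃ N, ∀ i ≥ N, ρ i ∈ InfOcc ρ := by
    have key : ∀ q : Q, ∃ M, q ∉ InfOcc ρ → ∀ i ≥ M, ρ i ≠ q := by
      intro q
      by_cases h : q ∈ InfOcc ρ
      · exact ⟨0, fun h' => absurd h h'⟩
      · have h' : ∃ M, ∀ i ≥ M, ρ i ≠ q := by
          simp only [InfOcc, Set.mem_setOf_eq] at h
          push_neg at h
          exact h
        obtain ⟨M, hM⟩ := h'
        exact ⟨M, fun _ => hM⟩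
    choose M hM using key
    refine ⟨Finset.univ.sup M, fun i hi => ?_⟩
    by_contra hbad
    exact hM (ρ i) hbad i (le_trans (Finset.le_sup (Finset.mem_univ _)) hi) rfl
  rcases Nat.eq_zero_or_pos k with hk0 | hkpos
  · -- no guess ever needed : stay with second component 0
    refine ⟨fun i => (ClsPar P 0 (ρ i), 0), ⟨?_, fun i => ?_⟩,
      (ClsPar P 0 qs, 0), ⟨qs, 0, Nat.zero_le r, by norm_num, by omega⟩, fun N' => ?_⟩
    · show (ClsPar P 0 (ρ 0), 0) = (improvedConv P r).init
      rw [h0]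
      rfl
    · show _ ∈ (improvedConv P r).trans (ClsPar P 0 (ρ i), 0) (w i)
      exact Or.inr ⟨ρ i, ρ (i + 1), 0, Nat.zero_le r, by norm_num, by norm_num,
        ⟨ρ (i + 1), hs i, mem_clsPar_self P 0 (ρ (i + 1))⟩, Nat.zero_le _⟩
    · obtain ⟨i, hi, he⟩ := hqinf N'
      exact ⟨i, hi, by show (ClsPar P 0 (ρ i), 0) = _; rw [he]⟩
  · -- jump at the first visit of qs after N
    obtain ⟨i₁, hi₁N, hi₁⟩ := hqinf (N + 1)
    refine ⟨fun i => if i < i₁ then (ClsPar P 0 (ρ i), 0)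
        else (ClsPar P (2 * k) (ρ i), 2 * k), ⟨?_, fun i => ?_⟩,
      (ClsPar P (2 * k) qs, 2 * k), ⟨qs, k, hkr, rfl, hk⟩, fun N' => ?_⟩
    · show (if 0 < i₁ then _ else _) = (improvedConv P r).init
      rw [if_pos (by omega : 0 < i₁), h0]
      rfl
    · show (if i + 1 < i₁ then _ else _) ∈
        (improvedConv P r).trans (if i < i₁ then _ else _) (w i)
      by_cases h1 : i + 1 < i₁
      · have h2 : i < i₁ := by omega
        rw [if_pos h2, if_pos h1]
        exact Or.inr ⟨ρ i, ρ (i + 1), 0, Nat.zero_le r, by norm_num, by norm_num,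
          ⟨ρ (i + 1), hs i, mem_clsPar_self P 0 (ρ (i + 1))⟩, Nat.zero_le _⟩
      · by_cases h2 : i + 1 = i₁
        · have h3 : i < i₁ := by omega
          rw [if_pos h3, if_neg h1]
          have hq : ρ (i + 1) = qs := by rw [h2]; exact hi₁
          refine Or.inl ⟨ρ i, ρ (i + 1), k, hkpos, hkr, rfl, by rw [hq], ?_,
            by rw [hq, hk]⟩
          exact ⟨ρ (i + 1), hs i, mem_clsPar_self P (2 * k) (ρ (i + 1))⟩
        · have h3 : ¬ i < i₁ := by omega
          rw [if_neg h3, if_neg h1]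
          refine Or.inr ⟨ρ i, ρ (i + 1), k, hkr, rfl, rfl,
            ⟨ρ (i + 1), hs i, mem_clsPar_self P (2 * k) (ρ (i + 1))⟩, ?_⟩
          have hmem : ρ (i + 1) ∈ InfOcc ρ := hN (i + 1) (by omega)
          have := hqmin (ρ (i + 1)) hmem
          omega
    · obtain ⟨i, hi, he⟩ := hqinf (max N' i₁)
      refine ⟨i, le_trans (le_max_left _ _) hi, ?_⟩
      have h4 : i₁ ≤ i := le_trans (le_max_right N' i₁) hi
      show (if i < i₁ then _ else _) = _
      rw [if_neg (by omega : ¬ i < i₁), he]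

end Aux

theorem stmt5 {A Q : Type*} [Fintype Q] (P : NPW A Q) (r : ℕ)
    (hbound : ∀ q, P.par q ≤ 2 * r) :
    (improvedConv P r).Lang ⊆ P.Lang ∧ P.Lang = (improvedConv P r).Lang := by
  exact ⟨improvedConv_sound P r,
    Set.Subset.antisymm (improvedConv_complete P r hbound) (improvedConv_sound P r)⟩
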